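/- Let R be a commutative ring and S an R-algebra of finite projective dimension as an R-module. If B is a Gorenstein injective R-module, then Hom_R(S, B) is a Gorenstein injective S-module. -/

import Mathlib

universe u

open TensorProduct

/-- A `ℤ`-indexed chain complex of `R`-modules: modules `X i` with
differentials `d i : X (i+1) →ₗ[R] X i` satisfying `d ∘ d = 0`. -/
structure ModComplex (R : Type u) [CommRing R] : Type (u + 1) where
  X : ℤ → Type u
  [addCommGroup : ∀ i, AddCommGroup (X i)]
  [module : ∀ i, Module R (X i)]
  d : ∀ i : ℤ, X (i + 1) →ₗ[R] X i
  dd : ∀ i : ℤ, (d i).comp (d (i + 1)) = 0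

attribute [instance] ModComplex.addCommGroup ModComplex.module

namespace ModComplex

variable {R : Type u} [CommRing R] (L : ModComplex R)

/-- The complex is acyclic: exact at every spot. -/
def Acyclic : Prop := ∀ i : ℤ, Function.Exact (L.d (i + 1)) (L.d i)

/-- The complex `Hom_R(L, N)` is acyclic. -/
def HomAcyclic (N : Type u) [AddCommGroup N] [Module R N] : Prop :=
  ∀ i : ℤ, Function.Exact
    (fun φ : L.X i →ₗ[R] N => φ.comp (L.d i))
    (fun φ : L.X (i + 1) →ₗ[R] N => φ.comp (L.d (i + 1)))

/-- The complex `Hom_R(E, L)` is acyclic. -/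
def CoHomAcyclic (E : Type u) [AddCommGroup E] [Module R E] : Prop :=
  ∀ i : ℤ, Function.Exact
    (fun φ : E →ₗ[R] L.X (i + 1 + 1) => (L.d (i + 1)).comp φ)
    (fun φ : E →ₗ[R] L.X (i + 1) => (L.d i).comp φ)

/-- The complex `E ⊗_R L` is acyclic. -/
def TensorAcyclic (E : Type u) [AddCommGroup E] [Module R E] : Prop :=
  ∀ i : ℤ, Function.Exact
    (LinearMap.lTensor E (L.d (i + 1)))
    (LinearMap.lTensor E (L.d i))

/-- The complex consists of finitely generated projective modules. -/
def FGProj : Prop :=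
  ∀ i : ℤ, Module.Finite R (L.X i) ∧ Module.Projective R (L.X i)

/-- A totally acyclic complex: an acyclic complex of finitely generated
projective modules such that `Hom_R(L, R)` is acyclic. -/
def TotallyAcyclic : Prop := L.Acyclic ∧ L.FGProj ∧ L.HomAcyclic R

end ModComplex

/-- `M` is (isomorphic to) the cokernel of the differential `d 0 : X 1 → X 0`. -/
def IsCokerOf {R : Type u} [CommRing R] (L : ModComplex R)
    (M : Type u) [AddCommGroup M] [Module R M] : Prop :=
  ∃ f : L.X 0 →ₗ[R] M, Function.Surjective f ∧ LinearMap.ker f = LinearMap.range (L.d 0)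

/-- `M` is (isomorphic to) the kernel of the differential `d 0 : X 1 → X 0`. -/
def IsKerOf {R : Type u} [CommRing R] (L : ModComplex R)
    (M : Type u) [AddCommGroup M] [Module R M] : Prop :=
  ∃ f : M →ₗ[R] L.X 1, Function.Injective f ∧ LinearMap.range f = LinearMap.ker (L.d 0)

/-- `M` is totally reflexive: it is a cokernel of a differential in a totally
acyclic complex of finitely generated projective modules. -/
def IsTotallyReflexive (R : Type u) [CommRing R]
    (M : Type u) [AddCommGroup M] [Module R M] : Prop :=
  ∃ L : ModComplex R, L.TotallyAcyclic ∧ IsCokerOf L M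

/-- Gorenstein projective module. -/
def IsGorensteinProjective (R : Type u) [CommRing R]
    (A : Type u) [AddCommGroup A] [Module R A] : Prop :=
  ∃ L : ModComplex R, L.Acyclic ∧ (∀ i, Module.Projective R (L.X i)) ∧
    (∀ (Q : Type u) [AddCommGroup Q] [Module R Q],
      Module.Projective R Q → L.HomAcyclic Q) ∧
    IsCokerOf L A

/-- Gorenstein injective module. -/
def IsGorensteinInjective (R : Type u) [CommRing R]
    (B : Type u) [AddCommGroup B] [Module R B] : Prop :=
  ∃ L : ModComplex R, L.Acyclic ∧ (∀ i, Module.Injective R (L.X i)) ∧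
    (∀ (E : Type u) [AddCommGroup E] [Module R E],
      Module.Injective R E → L.CoHomAcyclic E) ∧
    IsKerOf L B

/-- Gorenstein flat module. -/
def IsGorensteinFlat (R : Type u) [CommRing R]
    (M : Type u) [AddCommGroup M] [Module R M] : Prop :=
  ∃ L : ModComplex R, L.Acyclic ∧ (∀ i, Module.Flat R (L.X i)) ∧
    (∀ (E : Type u) [AddCommGroup E] [Module R E],
      Module.Injective R E → L.TensorAcyclic E) ∧
    IsCokerOf L M

/-- `M` has projective dimension at most `n`. -/
def ProjDimLe (R : Type u) [CommRing R] :
    ℕ → ∀ (M : Type u) [AddCommGroup M] [Module R M], Prop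
  | 0, M, _, _ => Module.Projective R M
  | n + 1, M, _, _ =>
    ∃ (P : Type u) (_ : AddCommGroup P) (_ : Module R P) (f : P →ₗ[R] M),
      Module.Projective R P ∧ Function.Surjective f ∧
        ProjDimLe R n (LinearMap.ker f)

/-- `M` has flat dimension at most `n`. -/
def FlatDimLe (R : Type u) [CommRing R] :
    ℕ → ∀ (M : Type u) [AddCommGroup M] [Module R M], Prop
  | 0, M, _, _ => Module.Flat R M
  | n + 1, M, _, _ =>
    ∃ (F : Type u) (_ : AddCommGroup F) (_ : Module R F) (f : F →ₗ[R] M),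
      Module.Flat R F ∧ Function.Surjective f ∧
        FlatDimLe R n (LinearMap.ker f)

/-- `M` has Gorenstein projective dimension at most `n`. -/
def GProjDimLe (R : Type u) [CommRing R] :
    ℕ → ∀ (M : Type u) [AddCommGroup M] [Module R M], Prop
  | 0, M, _, _ => IsGorensteinProjective R M
  | n + 1, M, _, _ =>
    ∃ (P : Type u) (_ : AddCommGroup P) (_ : Module R P) (f : P →ₗ[R] M),
      IsGorensteinProjective R P ∧ Function.Surjective f ∧
        GProjDimLe R n (LinearMap.ker f)

/-- The projective dimension, as an element of `ℕ∞`. -/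
noncomputable def projDim (R : Type u) [CommRing R]
    (M : Type u) [AddCommGroup M] [Module R M] : ℕ∞ :=
  sInf {n : ℕ∞ | ∃ m : ℕ, n = m ∧ ProjDimLe R m M}

/-- The Gorenstein projective dimension, as an element of `ℕ∞`. -/
noncomputable def gProjDim (R : Type u) [CommRing R]
    (M : Type u) [AddCommGroup M] [Module R M] : ℕ∞ :=
  sInf {n : ℕ∞ | ∃ m : ℕ, n = m ∧ GProjDimLe R m M}

/-- The `S`-module structure on `Hom_R(S, B)`, via `(s • f) t = f (s * t)`. -/
noncomputable instance homDomainModule {R : Type u} [CommRing R]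
    (S : Type u) [CommRing S] [Algebra R S]
    (B : Type u) [AddCommGroup B] [Module R B] :
    Module S (S →ₗ[R] B) where
  smul s f := f.comp (LinearMap.mul R S s)
  one_smul f := by ext t; show f (1 * t) = f t; rw [one_mul]
  mul_smul s₁ s₂ f := by
    ext t
    show f (s₁ * s₂ * t) = f (s₂ * (s₁ * t))
    congr 1
    ring
  smul_zero s := rfl
  smul_add s f g := rfl
  add_smul s₁ s₂ f := by
    ext t
    show f ((s₁ + s₂) * t) = f (s₁ * t) + f (s₂ * t)
    rw [add_mul, map_add]
  zero_smul f := by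
    ext t
    show f (0 * t) = 0
    rw [zero_mul, map_zero]

section Aux

open LinearMap

variable {R : Type u} [CommRing R]

theorem exact_of' {M N P : Type*} [Zero P] (f : M → N) (g : N → P)
    (h1 : ∀ m, g (f m) = 0) (h2 : ∀ n, g n = 0 → ∃ m, f m = n) : Function.Exact f g :=
  fun n => ⟨fun h => h2 n h, fun ⟨m, hm⟩ => hm ▸ h1 m⟩

theorem extend_inj {A B Q : Type u} [AddCommGroup A] [AddCommGroup B] [AddCommGroup Q]
    [Module R A] [Module R B] [Module R Q] (hQ : Module.Injective R Q)
    (ι : A →ₗ[R] B) (hι : Function.Injective ι) (g : A →ₗ[R] Q) :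
    ∃ g' : B →ₗ[R] Q, g'.comp ι = g := by
  obtain ⟨h, hh⟩ := hQ.out ι hι g
  exact ⟨h, LinearMap.ext hh⟩

theorem factor_surj {B C Q : Type u} [AddCommGroup B] [AddCommGroup C] [AddCommGroup Q]
    [Module R B] [Module R C] [Module R Q]
    (π : B →ₗ[R] C) (hπ : Function.Surjective π) (g : B →ₗ[R] Q)
    (h : LinearMap.ker π ≤ LinearMap.ker g) :
    ∃ ψ : C →ₗ[R] Q, ψ.comp π = g := by
  let p : (B ⧸ LinearMap.ker π) →ₗ[R] C := Submodule.liftQ _ π le_rfl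
  have hpinj : Function.Injective p := by
    rw [← LinearMap.ker_eq_bot, Submodule.ker_liftQ_eq_bot]
    exact le_rfl
  have hpsurj : Function.Surjective p := fun c => by
    obtain ⟨b, rfl⟩ := hπ c
    exact ⟨Submodule.Quotient.mk b, rfl⟩
  let e := LinearEquiv.ofBijective p ⟨hpinj, hpsurj⟩
  refine ⟨(Submodule.liftQ _ g h).comp e.symm.toLinearMap, ?_⟩
  ext b
  have he : e.symm (π b) = Submodule.Quotient.mk b := by
    apply e.injective
    rw [LinearEquiv.apply_symm_apply]
    rfl
  simp [he]

namespace ModComplex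

variable (L : ModComplex R)

theorem coHom_of {E : Type u} [AddCommGroup E] [Module R E]
    (h : ∀ i : ℤ, ∀ φ : E →ₗ[R] L.X (i + 1), (L.d i).comp φ = 0 →
      ∃ ψ : E →ₗ[R] L.X (i + 1 + 1), (L.d (i + 1)).comp ψ = φ) :
    L.CoHomAcyclic E := by
  intro i
  apply exact_of'
  · intro ψ
    show (L.d i).comp ((L.d (i + 1)).comp ψ) = 0
    rw [← LinearMap.comp_assoc, L.dd i, LinearMap.zero_comp]
  · exact h i

theorem coHom_unfold {E : Type u} [AddCommGroup E] [Module R E] (hE : L.CoHomAcyclic E)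
    (i : ℤ) (φ : E →ₗ[R] L.X (i + 1)) (hφ : (L.d i).comp φ = 0) :
    ∃ ψ : E →ₗ[R] L.X (i + 1 + 1), (L.d (i + 1)).comp ψ = φ :=
  (hE i φ).mp hφ

theorem coHom_proj (hL : L.Acyclic) {P : Type u} [AddCommGroup P] [Module R P]
    (hP : Module.Projective R P) : L.CoHomAcyclic P := by
  apply coHom_of
  intro i φ hφ
  haveI := hP
  have hsub : ∀ p, φ p ∈ LinearMap.range (L.d (i + 1)) := fun p => by
    have := (hL i (φ p)).mp (by
      have := congrArg (fun f => f p) hφ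
      simpa using this)
    simpa using this
  obtain ⟨h, hh⟩ := Module.projective_lifting_property ((L.d (i + 1)).rangeRestrict)
    (LinearMap.codRestrict _ φ hsub) (LinearMap.surjective_rangeRestrict _)
  refine ⟨h, ?_⟩
  ext p
  have := congrArg (fun f => (f p : L.X (i + 1))) hh
  simpa using this

end ModComplex

end Aux
namespace ModComplex

variable {R : Type u} [CommRing R] (L : ModComplex R)

theorem comp_cancel_surj {B C Q : Type u} [AddCommGroup B] [AddCommGroup C] [AddCommGroup Q]
    [Module R B] [Module R C] [Module R Q]
    {π : B →ₗ[R] C} (hπ : Function.Surjective π) {g₁ g₂ : C →ₗ[R] Q}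
    (h : g₁.comp π = g₂.comp π) : g₁ = g₂ := by
  ext c
  obtain ⟨b, rfl⟩ := hπ c
  exact congrArg (fun f => f b) h

theorem chase1 {A B C : Type u} [AddCommGroup A] [AddCommGroup B] [AddCommGroup C]
    [Module R A] [Module R B] [Module R C]
    (hXinj : ∀ i, Module.Injective R (L.X i))
    (ι : A →ₗ[R] B) (π : B →ₗ[R] C) (hι : Function.Injective ι)
    (hπ : Function.Surjective π) (hker : LinearMap.ker π = LinearMap.range ι)
    (hA : L.CoHomAcyclic A) (hB : L.CoHomAcyclic B) : L.CoHomAcyclic C := by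
  have hπι : π.comp ι = 0 := by
    ext a
    have : ι a ∈ LinearMap.ker π := by rw [hker]; exact ⟨a, rfl⟩
    simpa using this
  apply coHom_of
  intro i φ hφ
  obtain ⟨β, hβ⟩ := L.coHom_unfold hB i (φ.comp π) (by
    rw [← LinearMap.comp_assoc, hφ, LinearMap.zero_comp])
  obtain ⟨α, hα⟩ := L.coHom_unfold hA (i + 1) (β.comp ι) (by
    rw [← LinearMap.comp_assoc, hβ, LinearMap.comp_assoc, hπι, LinearMap.comp_zero])
  obtain ⟨α', hα'⟩ := extend_inj (hXinj (i + 1 + 1 + 1)) ι hι α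
  set β' := β - (L.d (i + 1 + 1)).comp α' with hβ'def
  have hβ'ι : β'.comp ι = 0 := by
    rw [hβ'def, LinearMap.sub_comp, LinearMap.comp_assoc, hα', hα, sub_self]
  obtain ⟨ψ, hψ⟩ := factor_surj π hπ β' (by
    intro b hb
    obtain ⟨a, rfl⟩ : b ∈ LinearMap.range ι := hker ▸ hb
    exact LinearMap.mem_ker.mpr (congrArg (fun f => f a) hβ'ι))
  refine ⟨ψ, comp_cancel_surj hπ ?_⟩
  rw [LinearMap.comp_assoc, hψ, hβ'def, LinearMap.comp_sub, hβ, ← LinearMap.comp_assoc,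
    L.dd (i + 1), LinearMap.zero_comp, sub_zero]

theorem chase2 {A B C : Type u} [AddCommGroup A] [AddCommGroup B] [AddCommGroup C]
    [Module R A] [Module R B] [Module R C]
    (hXinj : ∀ i, Module.Injective R (L.X i))
    (ι : A →ₗ[R] B) (π : B →ₗ[R] C) (hι : Function.Injective ι)
    (hπ : Function.Surjective π) (hker : LinearMap.ker π = LinearMap.range ι)
    (hB : L.CoHomAcyclic B) (hC : L.CoHomAcyclic C) : L.CoHomAcyclic A := by
  have hπι : π.comp ι = 0 := by
    ext a
    have : ι a ∈ LinearMap.ker π := by rw [hker]; exact ⟨a, rfl⟩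
    simpa using this
  apply coHom_of
  intro i φ hφ
  obtain ⟨k, rfl⟩ : ∃ k, i = k + 1 := ⟨i - 1, by omega⟩
  obtain ⟨φ', hφ'⟩ := extend_inj (hXinj (k + 1 + 1)) ι hι φ
  obtain ⟨γ, hγ⟩ := factor_surj π hπ ((L.d (k + 1)).comp φ') (by
    intro b hb
    obtain ⟨a, rfl⟩ : b ∈ LinearMap.range ι := hker ▸ hb
    rw [LinearMap.mem_ker]
    have h1 : φ' (ι a) = φ a := congrArg (fun f => f a) hφ'
    have h2 : (L.d (k+1)) (φ a) = 0 := congrArg (fun f => f a) hφ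
    simpa [h1] using h2)
  have hγ0 : (L.d k).comp γ = 0 := comp_cancel_surj hπ (by
    rw [LinearMap.comp_assoc, hγ, ← LinearMap.comp_assoc, L.dd k, LinearMap.zero_comp,
      LinearMap.zero_comp])
  obtain ⟨δ, hδ⟩ := L.coHom_unfold hC k γ hγ0
  obtain ⟨ε, hε⟩ := L.coHom_unfold hB (k + 1) (φ' - δ.comp π) (by
    rw [LinearMap.comp_sub, ← LinearMap.comp_assoc, hδ, hγ, sub_self])
  refine ⟨ε.comp ι, ?_⟩
  rw [← LinearMap.comp_assoc, hε, LinearMap.sub_comp, hφ', LinearMap.comp_assoc, hπι,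
    LinearMap.comp_zero, sub_zero]

end ModComplex
section Aux3

variable {R : Type u} [CommRing R]

theorem hom_injective {P I : Type u} [AddCommGroup P] [Module R P] [AddCommGroup I] [Module R I]
    (hP : Module.Projective R P) (hI : Module.Injective R I) :
    Module.Injective R (P →ₗ[R] I) where
  out X Y _ _ _ _ f hf g := by
    haveI := hP
    let g' : X ⊗[R] P →ₗ[R] I := TensorProduct.lift g
    have hinj : Function.Injective (f.rTensor P) :=
      Module.Flat.rTensor_preserves_injective_linearMap f hf
    obtain ⟨h', hh'⟩ := hI.out (f.rTensor P) hinj g'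
    refine ⟨TensorProduct.curry h', fun x => ?_⟩
    ext p
    simpa [g'] using hh' (x ⊗ₜ p)

namespace ModComplex

variable (L : ModComplex R)

theorem coHom_projdim (hL : L.Acyclic) (hXinj : ∀ i, Module.Injective R (L.X i)) :
    ∀ (n : ℕ) (M : Type u) [AddCommGroup M] [Module R M], ProjDimLe R n M →
      L.CoHomAcyclic M := by
  intro n
  induction n with
  | zero =>
    intro M _ _ h
    exact L.coHom_proj hL h
  | succ n ih =>
    intro M _ _ h
    obtain ⟨P, _, _, f, hP, hf, hK⟩ := h
    exact L.chase1 hXinj (LinearMap.ker f).subtype f (Submodule.injective_subtype _) hf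
      (Submodule.range_subtype _).symm (ih _ hK) (L.coHom_proj hL hP)

theorem coHom_dualdim
    (hL3 : ∀ (E : Type u) [AddCommGroup E] [Module R E], Module.Injective R E →
      L.CoHomAcyclic E)
    (hXinj : ∀ i, Module.Injective R (L.X i)) :
    ∀ (n : ℕ) (M : Type u) [AddCommGroup M] [Module R M], ProjDimLe R n M →
    ∀ (I : Type u) [AddCommGroup I] [Module R I], Module.Injective R I →
      L.CoHomAcyclic (M →ₗ[R] I) := by
  intro n
  induction n with
  | zero =>
    intro M _ _ h I _ _ hI
    exact hL3 _ (hom_injective h hI)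
  | succ n ih =>
    intro M _ _ h I _ _ hI
    obtain ⟨P, _, _, f, hP, hf, hK⟩ := h
    let K := LinearMap.ker f
    let ι : (M →ₗ[R] I) →ₗ[R] (P →ₗ[R] I) := LinearMap.lcomp R I f
    let π : (P →ₗ[R] I) →ₗ[R] (K →ₗ[R] I) := LinearMap.lcomp R I K.subtype
    have hι : Function.Injective ι := by
      intro g₁ g₂ hg
      exact comp_cancel_surj hf hg
    have hπ : Function.Surjective π := fun h => by
      obtain ⟨h', hh'⟩ := extend_inj hI K.subtype (Submodule.injective_subtype _) h
      exact ⟨h', hh'⟩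
    have hker : LinearMap.ker π = LinearMap.range ι := by
      ext g
      constructor
      · intro hg
        rw [LinearMap.mem_ker] at hg
        obtain ⟨ψ, hψ⟩ := factor_surj f hf g (by
          intro b hb
          rw [LinearMap.mem_ker]
          exact congrArg (fun u => u (⟨b, hb⟩ : K)) hg)
        exact ⟨ψ, hψ⟩
      · rintro ⟨ψ, rfl⟩
        rw [LinearMap.mem_ker]
        ext k
        show ψ (f (K.subtype k)) = 0
        have : f (K.subtype k) = 0 := k.2
        rw [this, map_zero]
    exact L.chase2 hXinj ι π hι hπ hker (hL3 _ (hom_injective hP hI)) (ih _ hK I hI)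

end ModComplex

theorem exists_embed_injective (E : Type u) [AddCommGroup E] [Module R E] :
    ∃ (I : Type u) (_ : AddCommGroup I) (_ : Module R I),
      Module.Injective R I ∧ ∃ e : E →ₗ[R] I, Function.Injective e := by
  let M : ModuleCat.{u} R := ModuleCat.of R E
  let I := CategoryTheory.Injective.under M
  haveI : CategoryTheory.Injective (ModuleCat.of R I.carrier) :=
    CategoryTheory.Injective.injective_under M
  exact ⟨I.carrier, inferInstance, inferInstance,
    Module.injective_module_of_injective_object R I.carrier,
    (CategoryTheory.Injective.ι M).hom, (ModuleCat.mono_iff_injective _).mp inferInstance⟩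

end Aux3
section SSide

variable {R : Type u} [CommRing R] {S : Type u} [CommRing S] [Algebra R S]

instance homDomainTower (I : Type u) [AddCommGroup I] [Module R I] :
    IsScalarTower R S (S →ₗ[R] I) := ⟨fun r s f => by
  ext t
  show f ((r • s) * t) = r • f (s * t)
  rw [Algebra.smul_def, mul_assoc, ← Algebra.smul_def, map_smul]⟩

variable {E : Type u} [AddCommGroup E] [Module R E] [Module S E] [IsScalarTower R S E]
variable {W : Type u} [AddCommGroup W] [Module R W]

/-- `x ↦ (s ↦ u (s • x))`. -/
def curryS (u : E →ₗ[R] W) : E →ₗ[S] (S →ₗ[R] W) where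
  toFun x :=
    { toFun := fun s => u (s • x)
      map_add' := fun s t => by
        show u ((s + t) • x) = u (s • x) + u (t • x)
        rw [add_smul, map_add]
      map_smul' := fun r s => by
        show u ((r • s) • x) = r • u (s • x)
        rw [smul_assoc, map_smul] }
  map_add' x y := by ext s; simp [smul_add]
  map_smul' s' x := by
    ext s
    show u (s • s' • x) = u ((s' * s) • x)
    rw [smul_smul, mul_comm]

theorem curryS_apply (u : E →ₗ[R] W) (x : E) (s : S) : curryS u x s = u (s • x) := rfl

/-- `x ↦ φ x 1`. -/
noncomputable def ev1 (φ : E →ₗ[S] (S →ₗ[R] W)) : E →ₗ[R] W where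
  toFun x := φ x 1
  map_add' x y := by
    show φ (x + y) 1 = φ x 1 + φ y 1
    rw [map_add]; rfl
  map_smul' r x := by
    show φ (r • x) 1 = r • φ x 1
    rw [← algebraMap_smul S r x, map_smul]
    show φ x (algebraMap R S r * 1) = r • φ x 1
    rw [mul_one, Algebra.algebraMap_eq_smul_one, map_smul]

theorem ev1_apply (φ : E →ₗ[S] (S →ₗ[R] W)) (x : E) : ev1 φ x = φ x 1 := rfl

theorem homDomain_injective {I : Type u} [AddCommGroup I] [Module R I]
    (hI : Module.Injective R I) : Module.Injective S (S →ₗ[R] I) where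
  out X Y _ _ _ _ f hf g := by
    letI : Module R X := Module.compHom X (algebraMap R S)
    letI : Module R Y := Module.compHom Y (algebraMap R S)
    haveI : IsScalarTower R S X := ⟨fun r s x => by rw [Algebra.smul_def, mul_smul]; rfl⟩
    haveI : IsScalarTower R S Y := ⟨fun r s x => by rw [Algebra.smul_def, mul_smul]; rfl⟩
    obtain ⟨hR, hhR⟩ := hI.out (f.restrictScalars R) hf (ev1 g)
    refine ⟨curryS hR, fun x => ?_⟩
    ext s
    show hR (s • f x) = g x s
    rw [← map_smul f s x]
    have h2 : hR (f (s • x)) = ev1 g (s • x) := hhR (s • x)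
    rw [h2]
    show g (s • x) 1 = g x s
    rw [map_smul]
    show g x (s * 1) = g x s
    rw [mul_one]

end SSide
/-- If `S` is an `R`-algebra of finite projective dimension and `B` is a
Gorenstein injective `R`-module, then `Hom_R(S, B)` is a Gorenstein injective
`S`-module. -/
theorem gorensteinInjective_coBaseChange {R : Type u} [CommRing R]
    (S : Type u) [CommRing S] [Algebra R S]
    (hS : ∃ n : ℕ, ProjDimLe R n S)
    (B : Type u) [AddCommGroup B] [Module R B]
    (hB : IsGorensteinInjective R B) :
    IsGorensteinInjective S (S →ₗ[R] B) := by
  obtain ⟨n, hSn⟩ := hS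
  obtain ⟨L, hLa, hLinj, hLco, fB, hfB, hfBr⟩ := hB
  let D : ∀ i : ℤ, (S →ₗ[R] L.X (i + 1)) →ₗ[S] (S →ₗ[R] L.X i) := fun i =>
    { toFun := fun φ => (L.d i).comp φ
      map_add' := fun φ ψ => by
        show (L.d i).comp (φ + ψ) = (L.d i).comp φ + (L.d i).comp ψ
        ext t; simp
      map_smul' := fun s φ => by ext t; rfl }
  let L' : ModComplex S :=
    { X := fun i => S →ₗ[R] L.X i
      d := D
      dd := fun i => by
        ext φ t
        exact DFunLike.congr_fun (L.dd i) (φ t) }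
  refine ⟨L', ?_, ?_, ?_, ?_⟩
  · -- Acyclic
    intro i
    exact L.coHom_projdim hLa hLinj n S hSn i
  · -- injective levels
    intro i
    exact homDomain_injective (hLinj i)
  · -- CoHomAcyclic for S-injective E
    intro E _ _ hE
    letI : Module R E := Module.compHom E (algebraMap R S)
    haveI : IsScalarTower R S E := ⟨fun r s x => by rw [Algebra.smul_def, mul_smul]; rfl⟩
    obtain ⟨I, _, _, hI, e, he⟩ := exists_embed_injective (R := R) E
    -- split embedding of E into Hom_R(S, I)
    let j : E →ₗ[S] (S →ₗ[R] I) := curryS e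
    have hj : Function.Injective j := by
      intro x y hxy
      have : e ((1 : S) • x) = e ((1 : S) • y) := DFunLike.congr_fun hxy 1
      rw [one_smul, one_smul] at this
      exact he this
    obtain ⟨p, hp⟩ := hE.out j hj (LinearMap.id (R := S) (M := E))
    have hHomSI : L.CoHomAcyclic (S →ₗ[R] I) :=
      L.coHom_dualdim hLco hLinj n S hSn I hI
    let jR : E →ₗ[R] (S →ₗ[R] I) := j.restrictScalars R
    let pR : (S →ₗ[R] I) →ₗ[R] E := p.restrictScalars R
    -- Hom_R(E, L) is acyclic
    have hEL : ∀ i : ℤ, ∀ g : E →ₗ[R] L.X (i + 1), (L.d i).comp g = 0 →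
        ∃ h : E →ₗ[R] L.X (i + 1 + 1), (L.d (i + 1)).comp h = g := by
      intro i g hg
      obtain ⟨H, hH⟩ := L.coHom_unfold hHomSI i (g.comp pR) (by
        rw [← LinearMap.comp_assoc, hg, LinearMap.zero_comp])
      refine ⟨H.comp jR, ?_⟩
      rw [← LinearMap.comp_assoc, hH, LinearMap.comp_assoc]
      have hpj : pR.comp jR = LinearMap.id := by
        ext x
        exact hp x
      rw [hpj, LinearMap.comp_id]
    apply L'.coHom_of
    intro i φ hφ
    have hgg : (L.d i).comp (ev1 φ) = 0 := by
      ext x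
      show L.d i (φ x 1) = 0
      exact DFunLike.congr_fun (DFunLike.congr_fun hφ x) 1
    obtain ⟨h, hh⟩ := hEL i (ev1 φ) hgg
    refine ⟨curryS h, ?_⟩
    ext x s
    show L.d (i + 1) (h (s • x)) = φ x s
    have h2 : L.d (i + 1) (h (s • x)) = ev1 φ (s • x) := DFunLike.congr_fun hh (s • x)
    rw [h2]
    show φ (s • x) 1 = φ x s
    rw [map_smul]
    show φ x (s * 1) = φ x s
    rw [mul_one]
  · -- IsKerOf
    have hd0fB : (L.d 0).comp fB = 0 := by
      ext b
      have : fB b ∈ LinearMap.ker (L.d 0) := hfBr ▸ ⟨b, rfl⟩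
      simpa using this
    refine ⟨{ toFun := fun g => fB.comp g
              map_add' := fun g₁ g₂ => by
                show fB.comp (g₁ + g₂) = fB.comp g₁ + fB.comp g₂
                ext t; simp
              map_smul' := fun s g => by ext t; rfl }, ?_, ?_⟩
    · intro g₁ g₂ hgg
      ext t
      exact hfB (DFunLike.congr_fun hgg t)
    · ext h
      constructor
      · rintro ⟨g, rfl⟩
        show (L.d 0).comp (fB.comp g) = 0
        rw [← LinearMap.comp_assoc, hd0fB, LinearMap.zero_comp]
      · intro hh
        have hh' : (L.d 0).comp h = 0 := LinearMap.mem_ker.mp hh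
        have hmem : ∀ s, h s ∈ LinearMap.range fB := fun s => by
          rw [hfBr, LinearMap.mem_ker]
          exact DFunLike.congr_fun hh' s
        let eq := LinearEquiv.ofInjective fB hfB
        refine ⟨eq.symm.toLinearMap.comp (LinearMap.codRestrict (LinearMap.range fB) h hmem), ?_⟩
        show fB.comp _ = h
        ext s
        show fB (eq.symm ⟨h s, hmem s⟩) = h s
        calc fB (eq.symm ⟨h s, hmem s⟩)
            = ((eq (eq.symm ⟨h s, hmem s⟩)) : L.X 1) :=
              LinearEquiv.ofInjective_apply (h := hfB) fB _
          _ = h s := by rw [eq.apply_symm_apply]
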